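/- Let g : [εT, ∞) → ℝ be differentiable with r g(r)² → 0 as r → ∞. Then ∫_{εT}^{T} (g'(r) + g(r)/r)² r² dr ≤ 10 ∫_{εT}^{∞} (g'(r))² r² dr. -/

import Mathlib

open MeasureTheory

/-- Flux-control estimate: for differentiable `g` on `[εT, ∞)` with
`r g(r)² → 0` at infinity,
`∫_{εT}^{T} (g' + g/r)² r² dr ≤ 10 ∫_{εT}^{∞} (g')² r² dr`. -/
theorem flux_control
    (ε T : ℝ) (hε : 0 < ε) (hε1 : ε < 1) (hT : 0 < T)
    (g : ℝ → ℝ)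
    (hg : ∀ r ∈ Set.Ici (ε * T), DifferentiableAt ℝ g r)
    (hdecay : Filter.Tendsto (fun r => r * (g r)^2) Filter.atTop (nhds 0))
    (hK : IntegrableOn (fun r => (deriv g r)^2 * r^2) (Set.Ioi (ε * T))) :
    ∫ r in Set.Ioc (ε * T) T, (deriv g r + g r / r)^2 * r^2
      ≤ 10 * ∫ r in Set.Ioi (ε * T), (deriv g r)^2 * r^2 := by
  set a := ε * T with ha_def
  have ha : 0 < a := mul_pos hε hT
  have haT : a < T := by
    have := mul_lt_mul_of_pos_right hε1 hT
    simpa [ha_def] using this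
  have hmeas : Measurable (deriv g) := measurable_deriv g
  set F : ℝ → ℝ := fun r => r * (g r)^2 with hF_def
  set F' : ℝ → ℝ := fun r => (g r)^2 + 2 * r * g r * deriv g r with hF'_def
  have hFderiv : ∀ r ∈ Set.Ici a, HasDerivAt F (F' r) r := by
    intro r hr
    have h1 : HasDerivAt g (deriv g r) r := (hg r hr).hasDerivAt
    have := (hasDerivAt_id r).mul (h1.pow 2)
    refine HasDerivAt.congr_deriv this ?_
    simp [hF'_def]
    ring
  -- continuity of g on Ici a
  have hgc : ContinuousOn g (Set.Ici a) := fun r hr =>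
    (hg r hr).continuousAt.continuousWithinAt
  -- integrability of deriv g on Ioc a b
  have hderiv_int : ∀ b : ℝ, IntegrableOn (deriv g) (Set.Ioc a b) := by
    intro b
    have h1 : IntegrableOn (fun r => (deriv g r)^2 * r^2) (Set.Ioc a b) :=
      hK.mono_set Set.Ioc_subset_Ioi_self
    have h2 : IntegrableOn (fun r => ((deriv g r)^2 * r^2 / a^2 + 1)/2) (Set.Ioc a b) :=
      ((h1.div_const _).add (integrableOn_const measure_Ioc_lt_top.ne)).div_const 2
    apply h2.mono' hmeas.aestronglyMeasurable
    filter_upwards [ae_restrict_mem measurableSet_Ioc] with r hr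
    have hra : a ≤ r := le_of_lt hr.1
    have ha2 : a^2 ≤ r^2 := by nlinarith
    have hxx : (deriv g r)^2 ≤ (deriv g r)^2 * r^2 / a^2 := by
      rw [le_div_iff₀ (by positivity)]
      nlinarith [sq_nonneg (deriv g r)]
    have h2x : 2 * |deriv g r| ≤ (deriv g r)^2 + 1 := by
      nlinarith [sq_nonneg (|deriv g r| - 1), sq_abs (deriv g r)]
    rw [Real.norm_eq_abs]
    linarith
  -- integrability of F' on Ioc a b
  have hF'int : ∀ b : ℝ, IntegrableOn F' (Set.Ioc a b) := by
    intro b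
    have hIcc : Set.Icc a b ⊆ Set.Ici a := Set.Icc_subset_Ici_self
    have hc1 : ContinuousOn (fun r => (g r)^2) (Set.Icc a b) :=
      ((hgc.mono hIcc).pow 2)
    have hg2 : IntegrableOn (fun r => (g r)^2) (Set.Ioc a b) :=
      (hc1.integrableOn_Icc).mono_set Set.Ioc_subset_Icc_self
    have hc2 : ContinuousOn (fun r => 2 * r * g r) (Set.Icc a b) := by
      exact (continuousOn_const.mul continuousOn_id).mul (hgc.mono hIcc)
    have hmul : IntegrableOn (fun r => (2 * r * g r) * deriv g r) (Set.Ioc a b) := by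
      obtain ⟨C, hC⟩ := (isCompact_Icc.image_of_continuousOn hc2).isBounded.subset_closedBall 0
      apply Integrable.bdd_mul (hderiv_int b) (c := C)
        ((hc2.mono Set.Ioc_subset_Icc_self).aestronglyMeasurable measurableSet_Ioc)
      filter_upwards [ae_restrict_mem measurableSet_Ioc] with r hr
      have := hC ⟨r, Set.Ioc_subset_Icc_self hr, rfl⟩
      simpa [Real.norm_eq_abs] using mem_closedBall_zero_iff.mp this
    have := hg2.add hmul
    exact this
  -- FTC on subintervals
  have key : ∀ c b : ℝ, a ≤ c → c ≤ b → ∫ r in Set.Ioc c b, F' r = F b - F c := by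
    intro c b hac hcb
    rw [← intervalIntegral.integral_of_le hcb]
    apply intervalIntegral.integral_eq_sub_of_hasDerivAt
    · intro r hr
      rw [Set.uIcc_of_le hcb] at hr
      exact hFderiv r (le_trans hac hr.1)
    · rw [intervalIntegrable_iff_integrableOn_Ioc_of_le hcb]
      exact (hF'int b).mono_set (Set.Ioc_subset_Ioc hac le_rfl)
  -- boundary term estimate
  have hKT : IntegrableOn (fun r => (deriv g r)^2 * r^2) (Set.Ioi T) :=
    hK.mono_set (Set.Ioi_subset_Ioi haT.le)
  have hFT : F T ≤ ∫ r in Set.Ioi T, (deriv g r)^2 * r^2 := by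
    have hmain : F T - (∫ r in Set.Ioi T, (deriv g r)^2 * r^2) ≤ 0 := by
      apply ge_of_tendsto hdecay
      filter_upwards [Filter.eventually_ge_atTop T] with b hb
      have h1 : ∫ r in Set.Ioc T b, F' r = F b - F T := key T b haT.le hb
      have hint1 : IntegrableOn (fun r => (deriv g r)^2 * r^2) (Set.Ioc T b) :=
        hKT.mono_set Set.Ioc_subset_Ioi_self
      have hint2 : IntegrableOn F' (Set.Ioc T b) :=
        (hF'int b).mono_set (Set.Ioc_subset_Ioc haT.le le_rfl)
      have h2 : ∫ r in Set.Ioc T b, (-((deriv g r)^2 * r^2)) ≤ ∫ r in Set.Ioc T b, F' r := by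
        apply setIntegral_mono_on hint1.neg hint2 measurableSet_Ioc
        intro r _
        simp only [hF'_def, Pi.neg_apply]
        nlinarith [sq_nonneg (deriv g r * r + g r)]
      have h3 : ∫ r in Set.Ioc T b, (deriv g r)^2 * r^2
          ≤ ∫ r in Set.Ioi T, (deriv g r)^2 * r^2 := by
        apply setIntegral_mono_set hKT
        · filter_upwards with r using by positivity
        · exact HasSubset.Subset.eventuallyLE Set.Ioc_subset_Ioi_self
      have h4 : ∫ r in Set.Ioc T b, (-((deriv g r)^2 * r^2))
          = -∫ r in Set.Ioc T b, (deriv g r)^2 * r^2 := integral_neg _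
      linarith
    linarith
  -- main identity on [a, T]
  have hint1 : IntegrableOn (fun r => (deriv g r)^2 * r^2) (Set.Ioc a T) :=
    hK.mono_set Set.Ioc_subset_Ioi_self
  have hmain : ∫ r in Set.Ioc a T, (deriv g r + g r / r)^2 * r^2
      = (∫ r in Set.Ioc a T, (deriv g r)^2 * r^2) + (F T - F a) := by
    rw [← key a T le_rfl haT.le, ← integral_add hint1 (hF'int T)]
    apply setIntegral_congr_fun measurableSet_Ioc
    intro r hr
    have hr0 : r ≠ 0 := ne_of_gt (lt_trans ha hr.1)
    simp only [hF'_def]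
    field_simp
    ring
  have hFa : 0 ≤ F a := mul_nonneg ha.le (sq_nonneg _)
  have hsplit : (∫ r in Set.Ioc a T, (deriv g r)^2 * r^2)
      + (∫ r in Set.Ioi T, (deriv g r)^2 * r^2)
      = ∫ r in Set.Ioi a, (deriv g r)^2 * r^2 := by
    rw [← setIntegral_union (Set.Ioc_disjoint_Ioi le_rfl) measurableSet_Ioi hint1 hKT,
      Set.Ioc_union_Ioi_eq_Ioi haT.le]
  have hKnn : 0 ≤ ∫ r in Set.Ioi a, (deriv g r)^2 * r^2 :=
    setIntegral_nonneg measurableSet_Ioi fun r _ => by positivity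
  linarith
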